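/- Let g : ℝ^d → ℝ be convex, p-times continuously differentiable with L_p-Lipschitz p-th derivatives, M ≥ L_p, and let x⁺ be the minimizer of x ↦ Φ^p_g(x; z) + (pM/(p+1)!)‖x − z‖^{p+1}. Then ‖∇g(x⁺)‖ ≤ ((pM + L_p)/p!)‖x⁺ − z‖^p. -/

import Mathlib

open Finset

/-- The `p`-th order Taylor polynomial of `g` at `z`, evaluated at `x`. -/
noncomputable def taylorApprox {d : ℕ} (p : ℕ) (g : EuclideanSpace ℝ (Fin d) → ℝ)
    (z x : EuclideanSpace ℝ (Fin d)) : ℝ :=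
  ∑ i ∈ Finset.range (p + 1),
    (1 / (Nat.factorial i : ℝ)) * iteratedFDeriv ℝ i g z (fun _ => x - z)

namespace TensorAux

set_option linter.unusedSectionVars false

lemma const_snoc {Y : Type*} (k : ℕ) (u : Y) :
    (fun _ : Fin (k+1) => u) = Fin.snoc (fun _ : Fin k => u) u := by
  funext j
  refine Fin.lastCases ?_ (fun i => ?_) j
  · rw [Fin.snoc_last]
  · rw [Fin.snoc_castSucc]

lemma cons_snoc_const {E : Type*} (k : ℕ) (u v : E) :
    (Fin.cons u (Fin.snoc (fun _ : Fin k => u) v) : Fin (k+2) → E)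
      = Fin.snoc (fun _ : Fin (k+1) => u) v := by
  funext j
  refine Fin.lastCases ?_ (fun i => ?_) j
  · rw [Fin.snoc_last, ← Fin.succ_last, Fin.cons_succ, Fin.snoc_last]
  · rw [Fin.snoc_castSucc]
    refine Fin.cases ?_ (fun i' => ?_) i
    · simp
    · rw [← Fin.succ_castSucc, Fin.cons_succ, Fin.snoc_castSucc]

lemma update_last_const {E : Type*} (k : ℕ) (u v : E) :
    Function.update (fun _ : Fin (k+1) => u) (Fin.last k) v
      = Fin.snoc (fun _ : Fin k => u) v := by
  funext j
  refine Fin.lastCases ?_ (fun i => ?_) j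
  · rw [Function.update_self, Fin.snoc_last]
  · rw [Function.update_of_ne (Fin.castSucc_lt_last i).ne, Fin.snoc_castSucc]

lemma snoc_eq_update {E : Type*} (k : ℕ) (c : Fin k → E) (v w : E) :
    (Fin.snoc c w : Fin (k+1) → E) = Function.update (Fin.snoc c v) (Fin.last k) w := by
  funext j
  refine Fin.lastCases ?_ (fun i => ?_) j
  · rw [Function.update_self, Fin.snoc_last]
  · rw [Function.update_of_ne (Fin.castSucc_lt_last i).ne, Fin.snoc_castSucc, Fin.snoc_castSucc]

variable {E : Type} [NormedAddCommGroup E] [NormedSpace ℝ E]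

lemma swap_last_two (i : ℕ) {Y : Type} [NormedAddCommGroup Y] [NormedSpace ℝ Y]
    (f : E → Y) (hf : ContDiff ℝ ((i+2 : ℕ) : ℕ∞) f) (z u v w : E) :
    iteratedFDeriv ℝ (i+1) (fderiv ℝ f) z (Fin.snoc (fun _ : Fin i => u) v) w
      = iteratedFDeriv ℝ (i+1) (fderiv ℝ f) z (Fin.snoc (fun _ : Fin i => u) w) v := by
  have hd1 : Differentiable ℝ f := hf.differentiable (by norm_cast)
  have hdf : ContDiff ℝ ((i+1 : ℕ) : ℕ∞) (fderiv ℝ f) := hf.fderiv_right (by norm_cast)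
  have hH : ContDiff ℝ ((i : ℕ) : ℕ∞) (fderiv ℝ (fderiv ℝ f)) := hdf.fderiv_right (by norm_cast)
  have hsymm : ∀ y : E, ∀ a b : E, fderiv ℝ (fderiv ℝ f) y a b = fderiv ℝ (fderiv ℝ f) y b a := by
    intro y a b
    exact second_derivative_symmetric (fun y' => (hd1 y').hasFDerivAt)
      ((hdf.differentiable (by norm_cast) y).hasFDerivAt) a b
  conv_lhs => rw [iteratedFDeriv_succ_apply_right]
  conv_rhs => rw [iteratedFDeriv_succ_apply_right]
  rw [Fin.init_snoc, Fin.init_snoc, Fin.snoc_last, Fin.snoc_last]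
  show (iteratedFDeriv ℝ i (fderiv ℝ (fderiv ℝ f)) z (fun _ : Fin i => u)) v w
      = (iteratedFDeriv ℝ i (fderiv ℝ (fderiv ℝ f)) z (fun _ : Fin i => u)) w v
  set g : (E →L[ℝ] (E →L[ℝ] Y)) →L[ℝ] (E →L[ℝ] (E →L[ℝ] Y)) :=
    (ContinuousLinearMap.flipₗᵢ ℝ E E Y).toLinearIsometry.toContinuousLinearMap with hg
  have hgap : ∀ (c : E →L[ℝ] (E →L[ℝ] Y)) (a b : E), g c a b = c b a := by
    intro c a b
    simp [hg]
  have hgH : (g ∘ (fderiv ℝ (fderiv ℝ f))) = fderiv ℝ (fderiv ℝ f) := by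
    funext y
    ext a b
    rw [Function.comp_apply, hgap]
    exact hsymm y b a
  have hle : (i : ℕ) ≤ (((i : ℕ∞) : WithTop ℕ∞)) := by exact_mod_cast le_rfl
  have hcomp := ContinuousLinearMap.iteratedFDeriv_comp_left (𝕜 := ℝ) (E := E)
    (F := E →L[ℝ] (E →L[ℝ] Y)) (G := E →L[ℝ] (E →L[ℝ] Y)) g (hH.contDiffAt (x := z)) hle
  rw [hgH] at hcomp
  have happ := congrArg
    (fun (m : ContinuousMultilinearMap ℝ (fun _ : Fin i => E) (E →L[ℝ] (E →L[ℝ] Y))) =>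
      m (fun _ => u)) hcomp
  simp only [ContinuousLinearMap.compContinuousMultilinearMap_coe, Function.comp_apply] at happ
  conv_lhs => rw [happ, hgap]

lemma update_snoc :
    ∀ (i : ℕ) {Y : Type} [NormedAddCommGroup Y] [NormedSpace ℝ Y]
      (f : E → Y), ContDiff ℝ ((i+1 : ℕ) : ℕ∞) f → ∀ (z u v : E) (j : Fin (i+1)),
      iteratedFDeriv ℝ (i+1) f z (Function.update (fun _ => u) j v)
        = iteratedFDeriv ℝ (i+1) f z (Fin.snoc (fun _ : Fin i => u) v) := by
  intro i
  induction i with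
  | zero =>
    intro Y _ _ f hf z u v j
    congr 1
    funext k
    have hj : j = Fin.last 0 := by apply Fin.ext; omega
    have hk : k = Fin.last 0 := by apply Fin.ext; omega
    rw [hk, hj, Function.update_self, Fin.snoc_last]
  | succ i ih =>
    intro Y _ _ f hf z u v j
    rcases Fin.eq_castSucc_or_eq_last j with ⟨j', rfl⟩ | rfl
    · conv_lhs => rw [iteratedFDeriv_succ_apply_right]
      conv_rhs => rw [iteratedFDeriv_succ_apply_right]
      have h1 : Fin.init (Function.update (fun _ : Fin (i+1+1) => u) (Fin.castSucc j') v)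
          = Function.update (fun _ : Fin (i+1) => u) j' v := by
        rw [Fin.init_update_castSucc]
        rfl
      have h2 : (Function.update (fun _ : Fin (i+1+1) => u) (Fin.castSucc j') v) (Fin.last (i+1))
          = u := Function.update_of_ne (Fin.castSucc_lt_last j').ne' _ _
      rw [h1, h2, Fin.init_snoc, Fin.snoc_last]
      rw [ih (fderiv ℝ f) (hf.fderiv_right (by norm_cast)) z u v j']
      have hs := swap_last_two i f hf z u v u
      rw [hs, ← const_snoc]
    · rw [update_last_const]

lemma curve_taylor {Y : Type*} [NormedAddCommGroup Y] [NormedSpace ℝ Y] (n : ℕ)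
    (c : ℕ → ℝ → Y) (C : ℝ)
    (hd : ∀ k < n, ∀ t : ℝ, HasDerivAt (c k) (c (k+1) t) t)
    (hC : ∀ t ∈ Set.Icc (0:ℝ) 1, ‖c n t - c n 0‖ ≤ C * t) :
    ∀ t ∈ Set.Icc (0:ℝ) 1,
      ‖c 0 t - ∑ k ∈ range (n+1), (t ^ k / (k.factorial : ℝ)) • c k 0‖
        ≤ C * t ^ (n+1) / ((n+1).factorial : ℝ) := by
  induction n generalizing c with
  | zero =>
    intro t ht
    simpa using hC t ht
  | succ n ih =>
    have hw' : ∀ t : ℝ, HasDerivAt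
        (fun t => c 0 t - ∑ k ∈ range (n+1+1), (t ^ k / (k.factorial : ℝ)) • c k 0)
        (c 1 t - ∑ k ∈ range (n+1), (t ^ k / (k.factorial : ℝ)) • c (k+1) 0) t := by
      intro t
      have h1 : HasDerivAt (fun t => c 0 t) (c 1 t) t := hd 0 (by omega) t
      have h2 : ∀ k ∈ range (n+1+1), HasDerivAt
          (fun t : ℝ => (t ^ k / (k.factorial : ℝ)) • c k 0)
          ((((k : ℝ) * t ^ (k-1)) / (k.factorial : ℝ)) • c k 0) t := by
        intro k _
        exact (((hasDerivAt_pow k t).div_const _).smul_const _)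
      have h4 := h1.sub (HasDerivAt.fun_sum h2)
      refine h4.congr_deriv (Eq.symm ?_)
      congr 1
      conv_rhs => rw [Finset.sum_range_succ']
      simp only [Nat.cast_zero, zero_mul, zero_div, zero_smul, add_zero]
      refine Finset.sum_congr rfl fun k _ => ?_
      congr 1
      rw [Nat.add_sub_cancel, Nat.factorial_succ]
      have hk0 : ((k:ℝ)+1) ≠ 0 := by positivity
      push_cast
      rw [mul_div_mul_left _ _ hk0]
    have hbound : ∀ t ∈ Set.Ico (0:ℝ) 1,
        ‖c 1 t - ∑ k ∈ range (n+1), (t ^ k / (k.factorial : ℝ)) • c (k+1) 0‖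
          ≤ C * t ^ (n+1) / ((n+1).factorial : ℝ) := by
      intro t ht
      exact ih (fun k => c (k+1)) (fun k hk t => hd (k+1) (by omega) t)
        (fun t ht => hC t ht) t (Set.mem_Icc_of_Ico ht)
    have hB : ∀ x : ℝ, HasDerivAt (fun x : ℝ => C * x ^ (n+1+1) / ((n+1+1).factorial : ℝ))
        (C * x ^ (n+1) / ((n+1).factorial : ℝ)) x := by
      intro x
      have h := (((hasDerivAt_pow (n+1+1) x).const_mul C).div_const ((n+1+1).factorial : ℝ))
      refine h.congr_deriv (Eq.symm ?_)
      have hk0 : ((n+1+1 : ℕ):ℝ) ≠ 0 := Nat.cast_ne_zero.2 (by omega)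
      have hfact : (((n+1+1).factorial : ℕ) : ℝ) = ((n+1+1 : ℕ):ℝ) * (((n+1).factorial : ℕ) : ℝ) := by
        rw [Nat.factorial_succ (n+1), Nat.cast_mul]
      rw [Nat.add_sub_cancel, hfact,
        show C * (((n+1+1 : ℕ):ℝ) * x ^ (n+1)) = ((n+1+1 : ℕ):ℝ) * (C * x ^ (n+1)) by ring,
        mul_div_mul_left _ _ hk0]
    have hzero : c 0 0 - ∑ k ∈ range (n+1+1), ((0:ℝ) ^ k / (k.factorial : ℝ)) • c k 0 = 0 := by
      rw [Finset.sum_range_succ']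
      simp
    have ha : ‖c 0 0 - ∑ k ∈ range (n+1+1), ((0:ℝ) ^ k / (k.factorial : ℝ)) • c k 0‖
        ≤ C * (0:ℝ) ^ (n+1+1) / ((n+1+1).factorial : ℝ) := by
      rw [hzero]
      simp
    have key := image_norm_le_of_norm_deriv_right_le_deriv_boundary
      (f := fun t => c 0 t - ∑ k ∈ range (n+1+1), (t ^ k / (k.factorial : ℝ)) • c k 0)
      (f' := fun t => c 1 t - ∑ k ∈ range (n+1), (t ^ k / (k.factorial : ℝ)) • c (k+1) 0)
      (a := 0) (b := 1)
      (fun t _ => (hw' t).continuousAt.continuousWithinAt)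
      (fun t _ => (hw' t).hasDerivWithinAt)
      (B := fun x => C * x ^ (n+1+1) / ((n+1+1).factorial : ℝ))
      (B' := fun x => C * x ^ (n+1) / ((n+1).factorial : ℝ))
      ha hB hbound
    intro t ht
    exact key ht

lemma fderiv_taylor_bound (p : ℕ) (hp : 1 ≤ p) (g : E → ℝ) (hg : ContDiff ℝ (p : ℕ∞) g)
    (L : ℝ)
    (hLip : ∀ x y : E, ‖iteratedFDeriv ℝ p g x - iteratedFDeriv ℝ p g y‖ ≤ L * ‖x - y‖)
    (z x v : E) :
    ‖fderiv ℝ g x v - ∑ k ∈ range p, (1/(k.factorial : ℝ)) *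
        iteratedFDeriv ℝ (k+1) g z (Fin.snoc (fun _ : Fin k => x - z) v)‖
      ≤ L / (p.factorial : ℝ) * (‖x - z‖ ^ p * ‖v‖) := by
  obtain ⟨n, rfl⟩ : ∃ n, p = n + 1 := ⟨p - 1, by omega⟩
  set u := x - z with hu
  set c : ℕ → ℝ → ℝ := fun k t =>
    iteratedFDeriv ℝ (k+1) g (z + t • u) (Fin.snoc (fun _ : Fin k => u) v) with hc
  have hd : ∀ k < n, ∀ t : ℝ, HasDerivAt (c k) (c (k+1) t) t := by
    intro k hk t
    have hG : ContDiff ℝ (1 : ℕ∞) (iteratedFDeriv ℝ (k+1) g) :=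
      hg.iteratedFDeriv_right (by norm_cast; omega)
    have hline : HasDerivAt (fun t : ℝ => z + t • u) u t := by
      simpa using ((hasDerivAt_id t).smul_const u).const_add z
    have hGd : HasFDerivAt (iteratedFDeriv ℝ (k+1) g)
        (fderiv ℝ (iteratedFDeriv ℝ (k+1) g) (z + t • u)) (z + t • u) :=
      ((hG.differentiable (by norm_num)) (z + t • u)).hasFDerivAt
    have h1 := hGd.comp_hasDerivAt t hline
    have h2 := ((ContinuousMultilinearMap.apply ℝ (fun _ : Fin (k+1) => E) ℝ
      (Fin.snoc (fun _ : Fin k => u) v)).hasFDerivAt.comp_hasDerivAt t h1)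
    refine h2.congr_deriv (Eq.symm ?_)
    have h3 := iteratedFDeriv_succ_apply_left (𝕜 := ℝ) (f := g) (x := z + t • u) (n := k+1)
      (Fin.cons u (Fin.snoc (fun _ : Fin k => u) v))
    simp only [Fin.cons_zero, Fin.tail_cons] at h3
    rw [cons_snoc_const] at h3
    simp only [hc, ContinuousMultilinearMap.apply_apply]
    exact h3
  have hC : ∀ t ∈ Set.Icc (0:ℝ) 1, ‖c n t - c n 0‖ ≤ (L * ‖u‖^(n+1) * ‖v‖) * t := by
    intro t ht
    have he : c n t - c n 0 =
        (iteratedFDeriv ℝ (n+1) g (z + t • u) - iteratedFDeriv ℝ (n+1) g z)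
          (Fin.snoc (fun _ : Fin n => u) v) := by
      simp [hc, ContinuousMultilinearMap.sub_apply]
    rw [he]
    calc ‖(iteratedFDeriv ℝ (n+1) g (z + t • u) - iteratedFDeriv ℝ (n+1) g z)
          (Fin.snoc (fun _ : Fin n => u) v)‖
        ≤ ‖iteratedFDeriv ℝ (n+1) g (z + t • u) - iteratedFDeriv ℝ (n+1) g z‖ *
          ∏ i : Fin (n+1), ‖(Fin.snoc (fun _ : Fin n => u) v : Fin (n+1) → E) i‖ :=
          ContinuousMultilinearMap.le_opNorm _ _
      _ ≤ (L * ‖z + t • u - z‖) * (‖u‖^n * ‖v‖) := by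
          have hprod : ∏ i : Fin (n+1), ‖(Fin.snoc (fun _ : Fin n => u) v : Fin (n+1) → E) i‖
              = ‖u‖^n * ‖v‖ := by
            rw [Fin.prod_univ_castSucc]
            simp
          have h0 : (0:ℝ) ≤ L * ‖z + t • u - z‖ :=
            le_trans (norm_nonneg _) (hLip (z + t • u) z)
          exact mul_le_mul (hLip _ _) (le_of_eq hprod)
            (Finset.prod_nonneg fun i _ => norm_nonneg _) h0
      _ = (L * ‖u‖^(n+1) * ‖v‖) * t := by
          have : ‖z + t • u - z‖ = t * ‖u‖ := by
            rw [add_sub_cancel_left, norm_smul, Real.norm_eq_abs, abs_of_nonneg ht.1]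
          rw [this]; ring
  have hmain := curve_taylor n c (L * ‖u‖^(n+1) * ‖v‖) hd hC 1 (by norm_num)
  have h01 : c 0 1 = fderiv ℝ g x v := by
    have hzx : z + u = x := by rw [hu]; abel
    simp only [hc]
    rw [one_smul, hzx, iteratedFDeriv_one_apply]
    congr 1
  have hck : ∀ k, c k 0 = iteratedFDeriv ℝ (k+1) g z (Fin.snoc (fun _ : Fin k => u) v) := by
    intro k
    simp [hc]
  rw [h01] at hmain
  have heq : ∑ k ∈ range (n+1), (1/(k.factorial : ℝ)) *
        iteratedFDeriv ℝ (k+1) g z (Fin.snoc (fun _ : Fin k => u) v)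
      = ∑ k ∈ range (n+1), ((1:ℝ) ^ k / (k.factorial : ℝ)) • c k 0 := by
    refine Finset.sum_congr rfl fun k _ => ?_
    rw [hck k, one_pow, smul_eq_mul]
  rw [heq]
  calc ‖fderiv ℝ g x v - ∑ k ∈ range (n+1), ((1:ℝ) ^ k / (k.factorial : ℝ)) • c k 0‖
      ≤ (L * ‖u‖^(n+1) * ‖v‖) * 1 ^ (n+1) / ((n+1).factorial : ℝ) := hmain
    _ = L / ((n+1).factorial : ℝ) * (‖u‖ ^ (n+1) * ‖v‖) := by ring

end TensorAux


theorem tensor_step_grad_bound {d : ℕ} (p : ℕ) (hp : 1 ≤ p)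
    (g : EuclideanSpace ℝ (Fin d) → ℝ)
    (hg : ContDiff ℝ (p : ℕ∞) g) (hconv : ConvexOn ℝ Set.univ g)
    (L M : ℝ) (hL : 0 < L)
    (hLip : ∀ x y : EuclideanSpace ℝ (Fin d),
      ‖iteratedFDeriv ℝ p g x - iteratedFDeriv ℝ p g y‖ ≤ L * ‖x - y‖)
    (hM : L ≤ M)
    (z xplus : EuclideanSpace ℝ (Fin d))
    (hmin : IsMinOn (fun x => taylorApprox p g z x +
      ((p : ℝ) * M / (Nat.factorial (p + 1) : ℝ)) * ‖x - z‖ ^ (p + 1)) Set.univ xplus) :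
    ‖gradient g xplus‖ ≤ (((p : ℝ) * M + L) / (Nat.factorial p : ℝ)) * ‖xplus - z‖ ^ p := by
  classical
  have hM0 : (0:ℝ) < M := lt_of_lt_of_le hL hM
  set u : EuclideanSpace ℝ (Fin d) := xplus - z with hu
  set S : EuclideanSpace ℝ (Fin d) → ℝ := fun v => ∑ k ∈ range p, (1/(k.factorial : ℝ)) *
    iteratedFDeriv ℝ (k+1) g z (Fin.snoc (fun _ : Fin k => u) v) with hS
  -- derivative of the Taylor polynomial along a ray
  have hSder : ∀ v : EuclideanSpace ℝ (Fin d),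
      HasDerivAt (fun s : ℝ => taylorApprox p g z (xplus + s • v)) (S v) 0 := by
    intro v
    have hterm : ∀ i : ℕ, HasDerivAt
        (fun s : ℝ => iteratedFDeriv ℝ i g z (fun _ : Fin i => xplus + s • v - z))
        (∑ j : Fin i, iteratedFDeriv ℝ i g z (Function.update (fun _ => u) j v)) 0 := by
      intro i
      have hcurve : ∀ _j : Fin i, HasFDerivAt (fun s : ℝ => xplus + s • v - z)
          ((1 : ℝ →L[ℝ] ℝ).smulRight v) 0 := by
        intro _
        have h : HasDerivAt (fun s : ℝ => xplus + s • v - z) v 0 := by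
          simpa using (((hasDerivAt_id (0:ℝ)).smul_const v).const_add xplus).sub_const z
        exact hasDerivAt_iff_hasFDerivAt.mp h
      have h := HasFDerivAt.multilinear_comp (f := iteratedFDeriv ℝ i g z)
        (g := fun _ : Fin i => fun s : ℝ => xplus + s • v - z)
        (g' := fun _ : Fin i => (1 : ℝ →L[ℝ] ℝ).smulRight v) (x := (0:ℝ)) hcurve
      have h2 := h.hasDerivAt
      refine h2.congr_deriv (Eq.symm ?_)
      rw [ContinuousLinearMap.sum_apply]
      refine Finset.sum_congr rfl fun j _ => ?_
      simp [hu]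
    have hsum : HasDerivAt
        (fun s : ℝ => ∑ i ∈ range (p+1),
          (1 / (Nat.factorial i : ℝ)) * iteratedFDeriv ℝ i g z (fun _ : Fin i => xplus + s • v - z))
        (∑ i ∈ range (p+1), (1 / (Nat.factorial i : ℝ)) *
          (∑ j : Fin i, iteratedFDeriv ℝ i g z (Function.update (fun _ => u) j v))) 0 := by
      refine HasDerivAt.fun_sum fun i _ => ?_
      exact (hterm i).const_mul _
    have hval : (∑ i ∈ range (p+1), (1 / (Nat.factorial i : ℝ)) *
          (∑ j : Fin i, iteratedFDeriv ℝ i g z (Function.update (fun _ => u) j v))) = S v := by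
      rw [Finset.sum_range_succ']
      simp only [Finset.univ_eq_empty, Finset.sum_empty, mul_zero, add_zero]
      rw [hS]
      refine Finset.sum_congr rfl fun k hk => ?_
      have hsmooth : ContDiff ℝ ((k+1 : ℕ) : ℕ∞) g := by
        refine hg.of_le ?_
        have : k + 1 ≤ p := by
          have := Finset.mem_range.mp hk
          omega
        exact_mod_cast this
      rw [Finset.sum_congr rfl fun j (_ : j ∈ Finset.univ) => TensorAux.update_snoc k g hsmooth z u v j]
      rw [Finset.sum_const, Finset.card_univ, Fintype.card_fin, nsmul_eq_mul]
      rw [← mul_assoc]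
      congr 1
      rw [Nat.factorial_succ, Nat.cast_mul]
      have hk0 : ((k+1 : ℕ):ℝ) ≠ 0 := Nat.cast_ne_zero.2 (by omega)
      field_simp
    rw [← hval]
    exact hsum
  -- one-sided optimality gives a lower bound on S v
  have hkey : ∀ v : EuclideanSpace ℝ (Fin d),
      -((p:ℝ) * M / (p.factorial : ℝ) * (‖u‖^p * ‖v‖)) ≤ S v := by
    intro v
    set c0 : ℝ := (p:ℝ) * M / ((p+1).factorial : ℝ) with hc0
    have hc0n : 0 ≤ c0 :=
      div_nonneg (mul_nonneg (Nat.cast_nonneg p) hM0.le) (Nat.cast_nonneg _)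
    have hBder : HasDerivAt (fun s : ℝ => c0 * (‖u‖ + s * ‖v‖)^(p+1))
        (c0 * (((p:ℝ)+1) * ‖u‖^p * ‖v‖)) 0 := by
      have h1 : HasDerivAt (fun s : ℝ => ‖u‖ + s * ‖v‖) ‖v‖ 0 := by
        simpa using ((hasDerivAt_id (0:ℝ)).mul_const ‖v‖).const_add ‖u‖
      have h2 := ((h1.pow (p+1)).const_mul c0)
      refine h2.congr_deriv (Eq.symm ?_)
      rw [Nat.add_sub_cancel]
      push_cast
      ring_nf
    have hφ := (hSder v).add hBder
    have hineq : ∀ s : ℝ, 0 < s →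
        taylorApprox p g z (xplus + (0:ℝ) • v) + c0 * (‖u‖ + 0 * ‖v‖)^(p+1)
        ≤ taylorApprox p g z (xplus + s • v) + c0 * (‖u‖ + s * ‖v‖)^(p+1) := by
      intro s hs
      have hm := isMinOn_iff.mp hmin (xplus + s • v) (Set.mem_univ _)
      have hnorm : ‖xplus + s • v - z‖ ≤ ‖u‖ + s * ‖v‖ := by
        have h1 : xplus + s • v - z = u + s • v := by rw [hu]; abel
        rw [h1]
        calc ‖u + s • v‖ ≤ ‖u‖ + ‖s • v‖ := norm_add_le _ _
          _ = ‖u‖ + s * ‖v‖ := by rw [norm_smul, Real.norm_eq_abs, abs_of_pos hs]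
      have hpow : ‖xplus + s • v - z‖^(p+1) ≤ (‖u‖ + s * ‖v‖)^(p+1) :=
        pow_le_pow_left₀ (norm_nonneg _) hnorm _
      have hzero : xplus + (0:ℝ) • v = xplus := by simp
      rw [hzero]
      have h2 : c0 * ‖xplus + s • v - z‖^(p+1) ≤ c0 * (‖u‖ + s * ‖v‖)^(p+1) :=
        mul_le_mul_of_nonneg_left hpow hc0n
      have h3 : ‖xplus - z‖ = ‖u‖ := by rw [hu]
      simp only [h3] at hm
      have h4 : ‖u‖ + 0 * ‖v‖ = ‖u‖ := by ring
      rw [h4]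
      calc taylorApprox p g z xplus + c0 * ‖u‖^(p+1)
          ≤ taylorApprox p g z (xplus + s • v) + c0 * ‖xplus + s • v - z‖^(p+1) := hm
        _ ≤ _ := by linarith
    have hslope : 0 ≤ S v + c0 * (((p:ℝ)+1) * ‖u‖^p * ‖v‖) := by
      have ht := hasDerivAt_iff_tendsto_slope.mp hφ
      have hsub : Set.Ioi (0:ℝ) ⊆ {(0:ℝ)}ᶜ := by
        intro x hx
        exact (ne_of_gt hx)
      have ht2 := ht.mono_left (nhdsWithin_mono 0 hsub)
      refine ge_of_tendsto ht2 ?_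
      filter_upwards [self_mem_nhdsWithin] with s hs
      rw [slope_def_field]
      apply div_nonneg
      · have := hineq s hs
        simp only [sub_nonneg]
        exact this
      · simp only [sub_zero]
        exact le_of_lt hs
    have hfin : c0 * (((p:ℝ)+1) * ‖u‖^p * ‖v‖) = (p:ℝ)*M/(p.factorial:ℝ) * (‖u‖^p * ‖v‖) := by
      rw [hc0, Nat.factorial_succ, Nat.cast_mul]
      have h1 : ((p+1 : ℕ):ℝ) ≠ 0 := Nat.cast_ne_zero.2 (by omega)
      have h2 : ((p.factorial : ℕ):ℝ) ≠ 0 := Nat.cast_ne_zero.2 p.factorial_ne_zero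
      field_simp
      push_cast; ring
    linarith [hslope, hfin.symm.le]
  -- |S v| bound via v and -v
  have hSneg : ∀ v, S (-v) = - S v := by
    intro v
    rw [hS]
    simp only
    rw [← Finset.sum_neg_distrib]
    refine Finset.sum_congr rfl fun k _ => ?_
    have hneg := (iteratedFDeriv ℝ (k+1) g z).toMultilinearMap.map_update_neg
      (Fin.snoc (fun _ : Fin k => u) v) (Fin.last k) v
    simp only [ContinuousMultilinearMap.coe_coe] at hneg
    rw [TensorAux.snoc_eq_update k (fun _ : Fin k => u) v (-v), hneg,
      ← TensorAux.snoc_eq_update k (fun _ : Fin k => u) v v]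
    ring
  have habs : ∀ v, |S v| ≤ (p:ℝ)*M/(p.factorial:ℝ) * (‖u‖^p * ‖v‖) := by
    intro v
    rw [abs_le]
    constructor
    · linarith [hkey v]
    · have h2 := hkey (-v)
      rw [hSneg v, norm_neg] at h2
      linarith
  -- assemble
  have hgrad : ‖gradient g xplus‖ = ‖fderiv ℝ g xplus‖ :=
    (InnerProductSpace.toDual ℝ (EuclideanSpace ℝ (Fin d))).symm.norm_map (fderiv ℝ g xplus)
  rw [hgrad]
  have hbound0 : 0 ≤ ((p : ℝ) * M + L) / (Nat.factorial p : ℝ) * ‖xplus - z‖ ^ p := by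
    apply mul_nonneg
    · apply div_nonneg
      · have : 0 ≤ (p:ℝ) * M := mul_nonneg (Nat.cast_nonneg p) hM0.le
        linarith [hL.le]
      · exact Nat.cast_nonneg _
    · positivity
  refine ContinuousLinearMap.opNorm_le_bound _ hbound0 fun v => ?_
  have h1 := TensorAux.fderiv_taylor_bound p hp g hg L hLip z xplus v
  rw [← hu] at h1
  have h2 := habs v
  have h3 : ‖fderiv ℝ g xplus v‖ ≤ ‖fderiv ℝ g xplus v - S v‖ + |S v| := by
    rw [← Real.norm_eq_abs]
    calc ‖fderiv ℝ g xplus v‖ = ‖(fderiv ℝ g xplus v - S v) + S v‖ := by ring_nf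
      _ ≤ ‖fderiv ℝ g xplus v - S v‖ + ‖S v‖ := norm_add_le _ _
  have h4 : ‖xplus - z‖ = ‖u‖ := by rw [hu]
  rw [h4]
  calc ‖fderiv ℝ g xplus v‖ ≤ ‖fderiv ℝ g xplus v - S v‖ + |S v| := h3
    _ ≤ L / (p.factorial : ℝ) * (‖u‖ ^ p * ‖v‖) + (p:ℝ)*M/(p.factorial:ℝ) * (‖u‖^p * ‖v‖) := by
        exact add_le_add h1 h2
    _ = ((p : ℝ) * M + L) / (Nat.factorial p : ℝ) * ‖u‖ ^ p * ‖v‖ := by ring
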